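/- The matrix ψ_{n+1}(t_1 t_2 ⋯ t_n) equals the n×n matrix A_n with entries a_{1,j} = −y^{j−1} for all j; a_{i,j} = 0 for i < j−1 and i > 1; a_{j+1,j} = x for 1 ≤ j ≤ n−1; and a_{i,j} = y^{j−i}(xy−1) for 1 < j ≤ i. -/

import Mathlib

open Matrix Polynomial

/-- Deformed Tits matrix `V_i` (generator index `i` is 1-based, `1 ≤ i ≤ m`):
the identity `m × m` matrix except column `i`, which has `-1` on the diagonal,
`y` in row `i-1` and `x` in row `i+1`. -/
def Vmat {R : Type*} [CommRing R] (x y : R) (m i : ℕ) : Matrix (Fin m) (Fin m) R :=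
  Matrix.of fun r c =>
    if (c : ℕ) + 1 = i then
      if (r : ℕ) + 1 = i then -1
      else if (r : ℕ) + 2 = i then y
      else if (r : ℕ) = i then x
      else 0
    else if r = c then 1 else 0

/-- The ring `ℤ[x,y]`. -/
noncomputable abbrev Lam : Type := MvPolynomial (Fin 2) ℤ

/-- The variable `x` of `ℤ[x,y]`. -/
noncomputable def xP : Lam := MvPolynomial.X 0

/-- The variable `y` of `ℤ[x,y]`. -/
noncomputable def yP : Lam := MvPolynomial.X 1

/-- The product `V_1 V_2 ⋯ V_n` over `ℤ[x,y]`, i.e. `ψ_{n+1}(t_1 t_2 ⋯ t_n)`. -/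
noncomputable def psiWordXY (n : ℕ) : Matrix (Fin n) (Fin n) Lam :=
  (List.ofFn fun i : Fin n => Vmat xP yP n ((i : ℕ) + 1)).prod

/-- The matrix `A_n` (in 1-based indices `i,j`): `a_{1,j} = −y^{j−1}`;
`a_{j+1,j} = x`; `a_{i,j} = y^{j−i}(xy−1)` for `1 < i ≤ j`; `a_{i,j} = 0`
otherwise. -/
noncomputable def Amat (n : ℕ) : Matrix (Fin n) (Fin n) Lam :=
  Matrix.of fun r c =>
    if (r : ℕ) = 0 then -(yP ^ (c : ℕ))
    else if (r : ℕ) = (c : ℕ) + 1 then xP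
    else if (r : ℕ) ≤ (c : ℕ) then yP ^ ((c : ℕ) - (r : ℕ)) * (xP * yP - 1)
    else 0

/-- Partial product matrix `B_k = V_1 ⋯ V_k`: columns `< k` agree with `A_n`,
the remaining columns are identity columns. -/
noncomputable def Bmat (n k : ℕ) : Matrix (Fin n) (Fin n) Lam :=
  Matrix.of fun r c => if (c : ℕ) < k then Amat n r c else if r = c then 1 else 0

lemma sum_ite_coe {M : Type*} [AddCommMonoid M] {n : ℕ} (t : ℕ) (f : Fin n → M) :
    (∑ j : Fin n, if (j : ℕ) = t then f j else 0) = if h : t < n then f ⟨t, h⟩ else 0 := by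
  split_ifs with h
  · rw [Finset.sum_eq_single (⟨t, h⟩ : Fin n)]
    · simp
    · intro b _ hb
      rw [if_neg]
      exact fun hc => hb (Fin.ext hc)
    · simp
  · exact Finset.sum_eq_zero fun j _ => if_neg (by omega)

lemma mul_Vmat {R : Type*} [CommRing R] (x y : R) (m i : ℕ)
    (M : Matrix (Fin m) (Fin m) R) (r c : Fin m) :
    (M * Vmat x y m i) r c =
      if (c : ℕ) + 1 = i then
        y * (∑ j : Fin m, if (j : ℕ) + 2 = i then M r j else 0)
          - M r c
          + x * (∑ j : Fin m, if (j : ℕ) = i then M r j else 0)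
      else M r c := by
  rw [Matrix.mul_apply]
  by_cases hc : (c : ℕ) + 1 = i
  · rw [if_pos hc]
    have key : ∀ j : Fin m, M r j * Vmat x y m i j c =
        (if (j : ℕ) + 2 = i then y * M r j else 0)
        + (if (j : ℕ) = (c : ℕ) then -(M r j) else 0)
        + (if (j : ℕ) = i then x * M r j else 0) := by
      intro j
      simp only [Vmat, of_apply, if_pos hc]
      split_ifs <;> first | ring1 | (exfalso; omega)
    rw [Finset.sum_congr rfl fun j _ => key j, Finset.sum_add_distrib, Finset.sum_add_distrib]
    have e1 : (∑ j : Fin m, if (j : ℕ) + 2 = i then y * M r j else 0)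
        = y * ∑ j : Fin m, if (j : ℕ) + 2 = i then M r j else 0 := by
      rw [Finset.mul_sum]
      exact Finset.sum_congr rfl fun j _ => by split_ifs <;> simp
    have e2 : (∑ j : Fin m, if (j : ℕ) = i then x * M r j else 0)
        = x * ∑ j : Fin m, if (j : ℕ) = i then M r j else 0 := by
      rw [Finset.mul_sum]
      exact Finset.sum_congr rfl fun j _ => by split_ifs <;> simp
    have e3 : (∑ j : Fin m, if (j : ℕ) = (c : ℕ) then -(M r j) else 0) = -(M r c) := by
      rw [sum_ite_coe]
      simp [c.isLt]
    rw [e1, e2, e3]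
    ring
  · rw [if_neg hc]
    have key : ∀ j : Fin m, M r j * Vmat x y m i j c =
        if j = c then M r j else 0 := by
      intro j
      simp only [Vmat, of_apply, if_neg hc]
      split_ifs with h1 h2 <;> simp_all
    rw [Finset.sum_congr rfl fun j _ => key j,
      Finset.sum_ite_eq' Finset.univ c (fun j => M r j)]
    simp

lemma Bmat_step (n k : ℕ) : Bmat n k * Vmat xP yP n (k + 1) = Bmat n (k + 1) := by
  refine Matrix.ext fun r c => ?_
  rw [mul_Vmat]
  by_cases hcc : (c : ℕ) + 1 = k + 1
  · have hck : (c : ℕ) = k := by omega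
    have hkn : k < n := hck ▸ c.isLt
    rw [if_pos hcc]
    have e2 : (∑ j : Fin n, if (j : ℕ) = k + 1 then Bmat n k r j else 0)
        = if (r : ℕ) = k + 1 then xP ^ 0 else 0 := by
      rw [sum_ite_coe]
      by_cases h1 : k + 1 < n
      · rw [dif_pos h1]
        simp only [Bmat, of_apply]
        have hv : ((⟨k + 1, h1⟩ : Fin n) : ℕ) = k + 1 := rfl
        rw [if_neg (by omega)]
        by_cases h2 : (r : ℕ) = k + 1
        · rw [if_pos (Fin.ext h2), if_pos h2, pow_zero]
        · rw [if_neg (fun hh => h2 (by rw [congrArg Fin.val hh])), if_neg h2]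
      · rw [dif_neg h1, if_neg (by omega)]
    have eB : Bmat n k r c = if (r : ℕ) = k then (1 : Lam) else 0 := by
      simp only [Bmat, of_apply]
      rw [if_neg (by omega)]
      by_cases h : (r : ℕ) = k
      · rw [if_pos (Fin.ext (by omega)), if_pos h]
      · rw [if_neg (fun hh => h (by rw [congrArg Fin.val hh]; omega)), if_neg h]
    rw [e2, eB]
    by_cases hk1 : 1 ≤ k
    · have hkn' : k - 1 < n := by omega
      have e1 : (∑ j : Fin n, if (j : ℕ) + 2 = k + 1 then Bmat n k r j else 0)
          = Amat n r ⟨k - 1, hkn'⟩ := by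
        have hcond : ∀ j : Fin n, ((j : ℕ) + 2 = k + 1) = ((j : ℕ) = k - 1) := by
          intro j; simp only [eq_iff_iff]; omega
        simp only [hcond]
        rw [sum_ite_coe, dif_pos hkn']
        simp only [Bmat, of_apply]
        have hv : ((⟨k - 1, hkn'⟩ : Fin n) : ℕ) = k - 1 := rfl
        rw [if_pos (by omega)]
      rw [e1]
      simp only [Bmat, Amat, of_apply, hck]
      have hv : ((⟨k - 1, hkn'⟩ : Fin n) : ℕ) = k - 1 := rfl
      rw [if_pos (show k < k + 1 by omega)]
      try simp only [hv]
      split_ifs <;>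
        first
          | ring1
          | (exfalso; omega)
          | ((conv_rhs => rw [show k = (k - 1) + 1 by omega, pow_succ']); ring1)
          | ((conv_rhs => rw [show k - (r : ℕ) = (k - 1 - (r : ℕ)) + 1 by omega, pow_succ']);
              ring1)
          | ((conv_rhs => rw [show k - (r : ℕ) = 0 by omega]); ring1)
    · have hk0 : k = 0 := by omega
      subst hk0
      have e1 : (∑ j : Fin n, if (j : ℕ) + 2 = 0 + 1 then Bmat n 0 r j else 0) = 0 :=
        Finset.sum_eq_zero fun j _ => if_neg (by omega)
      rw [e1]
      simp only [Bmat, Amat, of_apply, hck]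
      split_ifs <;> first | ring1 | (exfalso; omega)
  · rw [if_neg hcc]
    simp only [Bmat, of_apply]
    by_cases h : (c : ℕ) < k
    · rw [if_pos h, if_pos (by omega)]
    · rw [if_neg h, if_neg (show ¬(c : ℕ) < k + 1 by omega)]

lemma partial_prod (n k : ℕ) :
    ((List.range k).map fun i => Vmat xP yP n (i + 1)).prod = Bmat n k := by
  induction k with
  | zero =>
      refine Matrix.ext fun r c => ?_
      simp only [List.range_zero, List.map_nil, List.prod_nil, Bmat, of_apply]
      rw [if_neg (by omega)]
      by_cases h : r = c
      · rw [if_pos h, h, Matrix.one_apply_eq]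
      · rw [if_neg h, Matrix.one_apply_ne h]
  | succ k ih =>
      rw [List.range_succ, List.map_append, List.prod_append]
      simp only [List.map_cons, List.map_nil, List.prod_cons, List.prod_nil, mul_one]
      rw [ih, Bmat_step]

/-- Lemma 3.4(a): `ψ_{n+1}(t_1 t_2 ⋯ t_n) = A_n`. -/
theorem stmt8 (n : ℕ) : psiWordXY n = Amat n := by
  have hlist : (List.ofFn fun i : Fin n => Vmat xP yP n ((i : ℕ) + 1))
      = (List.range n).map fun i => Vmat xP yP n (i + 1) := by
    rw [List.ofFn_eq_map, ← List.map_coe_finRange_eq_range, List.map_map]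
    rfl
  rw [psiWordXY, hlist, partial_prod]
  refine Matrix.ext fun r c => ?_
  simp only [Bmat, of_apply]
  rw [if_pos c.isLt]
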